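/- Define, for x > 0, ε_max(x) by sinh(ε_max(x)) = tanh(1) · tanh(½·arsinh(1/sinh x)) / cosh(x/2). Then ε_max is a strictly decreasing positive function on (0,∞), ε_max(x) < tanh 1 for all x, and the limit of e^{(3/2)·x}·ε_max(x) as x → ∞ exists and is a positive real number. -/

import Mathlib

/-- The maximal strip width `ε_max`, defined by
`sinh (ε_max x) = tanh 1 * tanh (Col x / 2) / cosh (x / 2)` where
`Col x = arsinh (1 / sinh x)` is the collar width. -/
noncomputable def epsMax (x : ℝ) : ℝ :=
  Real.arsinh (Real.tanh 1 * Real.tanh (Real.arsinh (1 / Real.sinh x) / 2) / Real.cosh (x / 2))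

open Real Filter

lemma tanh_lt_tanh' {a b : ℝ} (h : a < b) : Real.tanh a < Real.tanh b := by
  rw [Real.tanh_eq_sinh_div_cosh, Real.tanh_eq_sinh_div_cosh,
    div_lt_div_iff₀ (Real.cosh_pos a) (Real.cosh_pos b)]
  have h1 : Real.sinh (a - b) < 0 := Real.sinh_neg_iff.mpr (by linarith)
  rw [Real.sinh_sub] at h1
  linarith

lemma tanh_pos' {t : ℝ} (h : 0 < t) : 0 < Real.tanh t := by
  rw [Real.tanh_eq_sinh_div_cosh]
  exact div_pos (Real.sinh_pos_iff.mpr h) (Real.cosh_pos t)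

lemma tanh_lt_one' (t : ℝ) : Real.tanh t < 1 := by
  rw [Real.tanh_eq_sinh_div_cosh, div_lt_one (Real.cosh_pos t)]
  have h := Real.cosh_sub_sinh t
  have := Real.exp_pos (-t)
  linarith

lemma arsinh_lt_self' {y : ℝ} (h : 0 < y) : Real.arsinh y < y := by
  calc Real.arsinh y < Real.arsinh (Real.sinh y) :=
        Real.arsinh_lt_arsinh.mpr (Real.self_lt_sinh_iff.mpr h)
    _ = y := Real.arsinh_sinh y

/-- slope limit composition -/
lemma tendsto_comp_div_self {f : ℝ → ℝ} {d : ℝ} (hf : HasDerivAt f d 0) (h0 : f 0 = 0)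
    {u : ℝ → ℝ} (hu : Tendsto u atTop (nhdsWithin (0:ℝ) {(0:ℝ)}ᶜ)) :
    Tendsto (fun x => f (u x) / u x) atTop (nhds d) := by
  have h := (hasDerivAt_iff_tendsto_slope.mp hf).comp hu
  refine h.congr fun x => ?_
  simp [Function.comp, slope_def_field, h0]

noncomputable def gAux (x : ℝ) : ℝ :=
  Real.tanh 1 * Real.tanh (Real.arsinh (1 / Real.sinh x) / 2) / Real.cosh (x / 2)

lemma gAux_pos {x : ℝ} (hx : 0 < x) : 0 < gAux x := by
  have h1 : 0 < Real.sinh x := Real.sinh_pos_iff.mpr hx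
  have h2 : 0 < Real.arsinh (1 / Real.sinh x) := Real.arsinh_pos_iff.mpr (by positivity)
  exact div_pos (mul_pos (tanh_pos' one_pos) (tanh_pos' (by positivity))) (Real.cosh_pos _)

lemma epsMax_eq (x : ℝ) : epsMax x = Real.arsinh (gAux x) := rfl

lemma gAux_anti : StrictAntiOn gAux (Set.Ioi 0) := by
  intro x hx y hy hxy
  simp only [Set.mem_Ioi] at hx hy
  have hsx : 0 < Real.sinh x := Real.sinh_pos_iff.mpr hx
  have hsy : 0 < Real.sinh y := Real.sinh_pos_iff.mpr hy
  have hinv : 1 / Real.sinh y < 1 / Real.sinh x :=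
    one_div_lt_one_div_of_lt hsx (Real.sinh_lt_sinh.mpr hxy)
  have harsinh : Real.arsinh (1 / Real.sinh y) < Real.arsinh (1 / Real.sinh x) :=
    Real.arsinh_lt_arsinh.mpr hinv
  have htanh : Real.tanh (Real.arsinh (1 / Real.sinh y) / 2) <
      Real.tanh (Real.arsinh (1 / Real.sinh x) / 2) :=
    tanh_lt_tanh' (by linarith)
  have hnum : Real.tanh 1 * Real.tanh (Real.arsinh (1 / Real.sinh y) / 2) <
      Real.tanh 1 * Real.tanh (Real.arsinh (1 / Real.sinh x) / 2) :=
    mul_lt_mul_of_pos_left htanh (tanh_pos' one_pos)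
  have hnum_pos : 0 < Real.tanh 1 * Real.tanh (Real.arsinh (1 / Real.sinh y) / 2) := by
    have : 0 < Real.arsinh (1 / Real.sinh y) := Real.arsinh_pos_iff.mpr (by positivity)
    exact mul_pos (tanh_pos' one_pos) (tanh_pos' (by positivity))
  have hcosh : Real.cosh (x / 2) < Real.cosh (y / 2) := by
    rw [Real.cosh_lt_cosh]
    rw [abs_of_pos (by positivity), abs_of_pos (by positivity)]
    linarith
  unfold gAux
  calc Real.tanh 1 * Real.tanh (Real.arsinh (1 / Real.sinh y) / 2) / Real.cosh (y / 2)
      < Real.tanh 1 * Real.tanh (Real.arsinh (1 / Real.sinh y) / 2) / Real.cosh (x / 2) := by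
        exact div_lt_div_of_pos_left hnum_pos (Real.cosh_pos _) hcosh
    _ < Real.tanh 1 * Real.tanh (Real.arsinh (1 / Real.sinh x) / 2) / Real.cosh (x / 2) :=
        (div_lt_div_iff_of_pos_right (Real.cosh_pos _)).mpr hnum

noncomputable def sAux (x : ℝ) : ℝ := 1 / Real.sinh x
noncomputable def aAux (x : ℝ) : ℝ := Real.arsinh (sAux x)

lemma gAux_eq (x : ℝ) : gAux x = Real.tanh 1 * Real.tanh (aAux x / 2) / Real.cosh (x / 2) := rfl

lemma continuous_tanh' : Continuous Real.tanh := by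
  have h : Real.tanh = fun x => Real.sinh x / Real.cosh x := funext Real.tanh_eq_sinh_div_cosh
  rw [h]
  exact Real.continuous_sinh.div Real.continuous_cosh fun x => (Real.cosh_pos x).ne'

theorem epsMax_properties :
    StrictAntiOn epsMax (Set.Ioi 0) ∧
    (∀ x : ℝ, 0 < x → 0 < epsMax x) ∧
    (∀ x : ℝ, 0 < x → epsMax x < Real.tanh 1) ∧
    ∃ L : ℝ, 0 < L ∧
      Filter.Tendsto (fun x : ℝ => Real.exp (3 / 2 * x) * epsMax x)
        Filter.atTop (nhds L) := by
  refine ⟨?_, ?_, ?_, ?_⟩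
  · intro x hx y hy hxy
    rw [epsMax_eq, epsMax_eq]
    exact Real.arsinh_lt_arsinh.mpr (gAux_anti hx hy hxy)
  · intro x hx
    rw [epsMax_eq]
    exact Real.arsinh_pos_iff.mpr (gAux_pos hx)
  · intro x hx
    rw [epsMax_eq]
    have h1 : Real.arsinh (gAux x) < gAux x := arsinh_lt_self' (gAux_pos hx)
    have h2 : gAux x < Real.tanh 1 := by
      rw [gAux_eq]
      have hap : 0 < aAux x / 2 := by
        have h1 : 0 < Real.sinh x := Real.sinh_pos_iff.mpr hx
        have : 0 < aAux x := Real.arsinh_pos_iff.mpr (by unfold sAux; positivity)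
        positivity
      have ht : Real.tanh (aAux x / 2) < 1 := tanh_lt_one' _
      have htp : 0 < Real.tanh (aAux x / 2) := tanh_pos' hap
      have h1p : 0 < Real.tanh 1 := tanh_pos' one_pos
      have h3 : Real.tanh 1 * Real.tanh (aAux x / 2) / Real.cosh (x / 2)
          ≤ Real.tanh 1 * Real.tanh (aAux x / 2) :=
        div_le_self (by positivity) (Real.one_le_cosh _)
      nlinarith
    linarith
  · refine ⟨2 * Real.tanh 1, mul_pos two_pos (tanh_pos' one_pos), ?_⟩
    have hsinh_top : Tendsto Real.sinh atTop atTop :=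
      tendsto_atTop_mono' atTop
        ((eventually_gt_atTop 0).mono fun x hx => (Real.self_lt_sinh_iff.mpr hx).le) tendsto_id
    have hhalf : Tendsto (fun x : ℝ => x / 2) atTop atTop := tendsto_id.atTop_div_const two_pos
    have hcosh_top : Tendsto (fun x : ℝ => Real.cosh (x / 2)) atTop atTop := by
      refine tendsto_atTop_mono' atTop
        ((eventually_gt_atTop 0).mono fun x hx => ?_) hhalf
      have h1 : x / 2 < Real.sinh (x / 2) := Real.self_lt_sinh_iff.mpr (by positivity)
      have h2 := Real.cosh_sub_sinh (x / 2)
      have h3 := Real.exp_pos (-(x / 2))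
      linarith
    have hs_pos : ∀ᶠ x : ℝ in atTop, 0 < sAux x :=
      (eventually_gt_atTop 0).mono fun x hx =>
        one_div_pos.mpr (Real.sinh_pos_iff.mpr hx)
    have hs_lim : Tendsto sAux atTop (nhds 0) := by
      have h := tendsto_inv_atTop_zero.comp hsinh_top
      refine h.congr fun x => ?_
      simp [sAux, one_div, Function.comp]
    have hs0 : Tendsto sAux atTop (nhdsWithin (0:ℝ) {(0:ℝ)}ᶜ) := by
      rw [tendsto_nhdsWithin_iff]
      exact ⟨hs_lim, hs_pos.mono fun x hx => by
        simp only [Set.mem_compl_iff, Set.mem_singleton_iff]; exact hx.ne'⟩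
    have ha_lim : Tendsto aAux atTop (nhds 0) := by
      have h := (Real.continuous_arsinh.tendsto 0).comp hs_lim
      simp only [Function.comp_def, Real.arsinh_zero] at h
      exact h
    have ha_pos : ∀ᶠ x : ℝ in atTop, 0 < aAux x :=
      hs_pos.mono fun x hx => Real.arsinh_pos_iff.mpr hx
    have hb_lim : Tendsto (fun x => aAux x / 2) atTop (nhds 0) := by
      simpa using ha_lim.div_const 2
    have hb0 : Tendsto (fun x => aAux x / 2) atTop (nhdsWithin (0:ℝ) {(0:ℝ)}ᶜ) := by
      rw [tendsto_nhdsWithin_iff]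
      refine ⟨by simpa using ha_lim.div_const 2, ha_pos.mono fun x hx => ?_⟩
      simp only [Set.mem_compl_iff, Set.mem_singleton_iff]
      positivity
    have hg_lim : Tendsto gAux atTop (nhds 0) := by
      have h1 : Tendsto (fun x => Real.tanh (aAux x / 2)) atTop (nhds 0) := by
        have h := (continuous_tanh'.tendsto 0).comp hb_lim
        simpa [Real.tanh_zero, Function.comp_def] using h
      have h2 : Tendsto (fun x : ℝ => (Real.cosh (x / 2))⁻¹) atTop (nhds 0) :=
        hcosh_top.inv_tendsto_atTop
      have h3 := (h1.mul h2).const_mul (Real.tanh 1)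
      have h4 : Real.tanh 1 * (0 * 0) = 0 := by ring
      rw [h4] at h3
      refine h3.congr fun x => ?_
      rw [gAux_eq]; ring
    have hg_pos : ∀ᶠ x : ℝ in atTop, 0 < gAux x :=
      (eventually_gt_atTop 0).mono fun x hx => gAux_pos hx
    have hg0 : Tendsto gAux atTop (nhdsWithin (0:ℝ) {(0:ℝ)}ᶜ) := by
      rw [tendsto_nhdsWithin_iff]
      exact ⟨hg_lim, hg_pos.mono fun x hx => by
        simp only [Set.mem_compl_iff, Set.mem_singleton_iff]; exact hx.ne'⟩
    have hdA : HasDerivAt Real.arsinh 1 0 := by simpa using Real.hasDerivAt_arsinh 0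
    have hdS : HasDerivAt Real.sinh 1 0 := by simpa using Real.hasDerivAt_sinh 0
    have T1 : Tendsto (fun x => Real.arsinh (gAux x) / gAux x) atTop (nhds 1) :=
      tendsto_comp_div_self hdA Real.arsinh_zero hg0
    have T3 : Tendsto (fun x => Real.arsinh (sAux x) / sAux x) atTop (nhds 1) :=
      tendsto_comp_div_self hdA Real.arsinh_zero hs0
    have T2 : Tendsto (fun x => Real.tanh (aAux x / 2) / (aAux x / 2)) atTop (nhds 1) := by
      have hsl : Tendsto (fun x => Real.sinh (aAux x / 2) / (aAux x / 2)) atTop (nhds 1) :=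
        tendsto_comp_div_self hdS Real.sinh_zero hb0
      have hc : Tendsto (fun x => (Real.cosh (aAux x / 2))⁻¹) atTop (nhds 1) := by
        have h := (Real.continuous_cosh.tendsto 0).comp hb_lim
        simp only [Function.comp, Real.cosh_zero] at h
        have h2 := h.inv₀ (by norm_num)
        simpa using h2
      have h3 := hsl.mul hc
      rw [mul_one] at h3
      refine h3.congr fun x => ?_
      rw [Real.tanh_eq_sinh_div_cosh]; ring
    have T4 : Tendsto (fun x : ℝ => Real.exp x / Real.sinh x) atTop (nhds 2) := by
      have hexp : Tendsto (fun x : ℝ => Real.exp (-(2 * x))) atTop (nhds 0) := by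
        have h2 : Tendsto (fun x : ℝ => 2 * x) atTop atTop :=
          tendsto_id.const_mul_atTop two_pos
        exact Real.tendsto_exp_neg_atTop_nhds_zero.comp h2
      have hden : Tendsto (fun x : ℝ => 1 - Real.exp (-(2 * x))) atTop (nhds 1) := by
        simpa using tendsto_const_nhds.sub hexp
      have hlim : Tendsto (fun x : ℝ => 2 / (1 - Real.exp (-(2 * x)))) atTop (nhds (2 / 1)) :=
        tendsto_const_nhds.div hden (by norm_num)
      norm_num at hlim
      refine hlim.congr' ?_
      filter_upwards [eventually_gt_atTop 0] with x hx
      have hsx : (0:ℝ) < Real.sinh x := Real.sinh_pos_iff.mpr hx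
      have hE : Real.exp x ≠ 0 := (Real.exp_pos x).ne'
      have hlt : Real.exp (-(2 * x)) < 1 := by
        calc Real.exp (-(2 * x)) < Real.exp 0 := Real.exp_lt_exp.mpr (by linarith)
          _ = 1 := Real.exp_zero
      rw [Real.sinh_eq, show -(2 * x) = -x + -x by ring, Real.exp_add, Real.exp_neg]
      field_simp
    have T5 : Tendsto (fun x : ℝ => Real.exp (x / 2) / Real.cosh (x / 2)) atTop (nhds 2) := by
      have hexp : Tendsto (fun x : ℝ => Real.exp (-x)) atTop (nhds 0) :=
        Real.tendsto_exp_neg_atTop_nhds_zero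
      have hden : Tendsto (fun x : ℝ => 1 + Real.exp (-x)) atTop (nhds 1) := by
        simpa using tendsto_const_nhds.add hexp
      have hlim : Tendsto (fun x : ℝ => 2 / (1 + Real.exp (-x))) atTop (nhds (2 / 1)) :=
        tendsto_const_nhds.div hden (by norm_num)
      norm_num at hlim
      refine hlim.congr fun x => ?_
      have hE : Real.exp (x / 2) ≠ 0 := (Real.exp_pos _).ne'
      have hP : (0:ℝ) < 1 + Real.exp (-x) := by positivity
      rw [Real.cosh_eq, show -x = -(x / 2) + -(x / 2) by ring, Real.exp_add, Real.exp_neg]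
      field_simp
    have hfinal := (((T1.mul T2).mul T3).mul (T4.mul T5)).mul_const (Real.tanh 1 / 2)
    have hval : (1:ℝ) * 1 * 1 * (2 * 2) * (Real.tanh 1 / 2) = 2 * Real.tanh 1 := by ring
    rw [hval] at hfinal
    refine hfinal.congr' ?_
    filter_upwards [eventually_gt_atTop 0] with x hx
    have hsx : (0:ℝ) < Real.sinh x := Real.sinh_pos_iff.mpr hx
    have hsa : (0:ℝ) < sAux x := one_div_pos.mpr hsx
    have haa : (0:ℝ) < aAux x := Real.arsinh_pos_iff.mpr hsa
    have hgg : (0:ℝ) < gAux x := gAux_pos hx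
    have htt : (0:ℝ) < Real.tanh (aAux x / 2) := tanh_pos' (by positivity)
    have h1t : (0:ℝ) < Real.tanh 1 := tanh_pos' one_pos
    have hcc : (0:ℝ) < Real.cosh (x / 2) := Real.cosh_pos _
    have hExp : (3:ℝ) / 2 * x = x + x / 2 := by ring
    rw [epsMax_eq, hExp, Real.exp_add]
    have haux : Real.arsinh (sAux x) = aAux x := rfl
    rw [haux, gAux_eq, show sAux x = 1 / Real.sinh x from rfl]
    field_simp
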